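/- One-step expected descent of the stochastic zero-shifting update: for every W ∈ ℝ^D, the average over all sign vectors s ∈ {−1,1}^D of φ(W + Δ·(s ⊙ F(W)) − Δ·G(W)) is at most φ(W) − Δ‖G(W)‖² + L_q·Δ²·q_max². That is, 2^{−D} · Σ_{s ∈ {−1,1}^D} φ(W + Δ·(s ⊙ F(W)) − Δ·G(W)) ≤ φ(W) − Δ‖G(W)‖² + L_q·Δ²·q_max². -/

import Mathlib

noncomputable section

open scoped BigOperators

/-- Coordinatewise (Hadamard) product on Euclidean space. -/
def had {D : ℕ} (x y : EuclideanSpace ℝ (Fin D)) : EuclideanSpace ℝ (Fin D) :=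
  WithLp.toLp 2 (fun d => x d * y d)

/-- The ±1 sign vector associated to a boolean vector. -/
def sgn {D : ℕ} (s : Fin D → Bool) : EuclideanSpace ℝ (Fin D) :=
  WithLp.toLp 2 (fun d => if s d then (1 : ℝ) else -1)

open InnerProductSpace in
/-- Descent lemma for an `Lq`-Lipschitz gradient (with constant `Lq` instead of `Lq/2`). -/
lemma descent_aux {D : ℕ} (Lq : ℝ) (hLq : 0 < Lq)
    (G : EuclideanSpace ℝ (Fin D) → EuclideanSpace ℝ (Fin D))
    (φ : EuclideanSpace ℝ (Fin D) → ℝ)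
    (hgrad : ∀ W, HasGradientAt φ (G W) W)
    (hgradLip : ∀ U V, ‖G U - G V‖ ≤ Lq * ‖U - V‖)
    (W v : EuclideanSpace ℝ (Fin D)) :
    φ (W + v) ≤ φ W + inner ℝ (G W) v + Lq * ‖v‖ ^ 2 := by
  set y := W + v with hy
  have seg : Convex ℝ (segment ℝ W y) := convex_segment _ _
  have key := seg.norm_image_sub_le_of_norm_hasFDerivWithin_le'
    (f := φ) (f' := fun z => (toDual ℝ _) (G z)) (φ := (toDual ℝ _) (G W))
    (C := Lq * ‖v‖)
    (fun z _ => (hgrad z).hasFDerivAt.hasFDerivWithinAt)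
    (fun z hz => by
      rw [← map_sub]
      rw [LinearIsometryEquiv.norm_map]
      obtain ⟨a, b, ha, hb, hab, rfl⟩ := hz
      have : a • W + b • y - W = b • v := by
        have hab' : a = 1 - b := by linarith
        rw [hab', hy]; module
      calc ‖G (a • W + b • y) - G W‖ ≤ Lq * ‖a • W + b • y - W‖ := hgradLip _ _
        _ = Lq * (b * ‖v‖) := by rw [this, norm_smul, Real.norm_of_nonneg hb]
        _ ≤ Lq * (1 * ‖v‖) := by
            have hb1 : b ≤ 1 := by linarith
            have h0 := norm_nonneg v
            nlinarith [mul_nonneg (mul_nonneg hLq.le (sub_nonneg.mpr hb1)) h0]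
        _ = Lq * ‖v‖ := by ring)
    (left_mem_segment ℝ W y) (right_mem_segment ℝ W y)
  have hyW : y - W = v := by rw [hy]; abel
  rw [hyW, toDual_apply_apply] at key
  have h1 : |φ y - φ W - inner ℝ (G W) v| ≤ Lq * ‖v‖ * ‖v‖ := key
  have h2 := abs_le.mp h1
  nlinarith [h2.2]

/-- Summing a sign coordinate over all sign vectors gives zero. -/
lemma sum_sgn_aux {D : ℕ} (d : Fin D) : ∑ s : Fin D → Bool, sgn s d = 0 := by
  have hbij : Function.Bijective
      (fun s : Fin D → Bool => Function.update s d (!(s d))) := by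
    apply Function.Involutive.bijective
    intro s
    funext e
    by_cases he : e = d
    · subst he; simp
    · simp [Function.update, he]
  have h := Fintype.sum_bijective _ hbij
      (fun s : Fin D → Bool => sgn s d) (fun s : Fin D → Bool => - sgn s d)
      (fun s => by
        simp only [sgn, Function.update_self]
        cases hsd : s d <;> simp)
  rw [Finset.sum_neg_distrib] at h
  linarith

/-- One-step expected descent of the stochastic zero-shifting update: averaging the
pulse update over all `2^D` sign vectors decreases `φ` by `Δ‖G(W)‖²` up to an
`L_q Δ² q_max²` error term. -/
theorem zero_shifting_one_step_descent
    (D : ℕ) (hD : 1 ≤ D) (Δ qmax Lq : ℝ) (hΔ : 0 < Δ) (hq : 0 < qmax) (hLq : 0 < Lq)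
    (Qp Qm : EuclideanSpace ℝ (Fin D) → EuclideanSpace ℝ (Fin D))
    (hQp : ∀ W, ‖Qp W‖ ≤ qmax) (hQm : ∀ W, ‖Qm W‖ ≤ qmax)
    (F G : EuclideanSpace ℝ (Fin D) → EuclideanSpace ℝ (Fin D))
    (hF : ∀ W, F W = (1 / 2 : ℝ) • (Qm W + Qp W))
    (hG : ∀ W, G W = (1 / 2 : ℝ) • (Qm W - Qp W))
    (φ : EuclideanSpace ℝ (Fin D) → ℝ)
    (hgrad : ∀ W, HasGradientAt φ (G W) W)
    (hgradLip : ∀ U V, ‖G U - G V‖ ≤ Lq * ‖U - V‖)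
    (W : EuclideanSpace ℝ (Fin D)) :
    ((2 : ℝ) ^ D)⁻¹ * ∑ s : Fin D → Bool, φ (W + Δ • had (sgn s) (F W) - Δ • G W)
      ≤ φ W - Δ * ‖G W‖ ^ 2 + Lq * Δ ^ 2 * qmax ^ 2 := by
  set F0 := F W with hF0
  set G0 := G W with hG0
  set T : (Fin D → Bool) → ℝ := fun s => ∑ d, G0 d * (sgn s d * F0 d) with hT
  set v : (Fin D → Bool) → EuclideanSpace ℝ (Fin D) :=
    fun s => Δ • had (sgn s) F0 - Δ • G0 with hv
  -- inner product computation
  have hinner : ∀ s, (inner ℝ G0 (v s) : ℝ) = Δ * T s - Δ * ‖G0‖ ^ 2 := by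
    intro s
    rw [hv]
    simp only
    rw [inner_sub_right, real_inner_smul_right, real_inner_smul_right,
      real_inner_self_eq_norm_sq]
    have : (inner ℝ G0 (had (sgn s) F0) : ℝ) = T s := by
      rw [hT]
      simp only [PiLp.inner_apply, RCLike.inner_apply, conj_trivial]
      exact Finset.sum_congr rfl (fun d _ => by show (sgn s d * F0 d) * G0 d = _; ring)
    rw [this]
  -- Hadamard product has same norm as F0
  have hhad : ∀ s, ‖had (sgn s) F0‖ ^ 2 = ‖F0‖ ^ 2 := by
    intro s
    rw [← real_inner_self_eq_norm_sq, ← real_inner_self_eq_norm_sq]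
    simp only [PiLp.inner_apply, RCLike.inner_apply, conj_trivial]
    apply Finset.sum_congr rfl
    intro d _
    show (sgn s d * F0 d) * (sgn s d * F0 d) = F0 d * F0 d
    simp only [sgn]
    cases hsd : s d <;> simp <;> ring
  -- norm of the step
  have hnorm : ∀ s, ‖v s‖ ^ 2 = Δ ^ 2 * ‖F0‖ ^ 2 - 2 * Δ ^ 2 * T s + Δ ^ 2 * ‖G0‖ ^ 2 := by
    intro s
    rw [hv]
    simp only
    rw [norm_sub_sq_real]
    rw [real_inner_smul_left, real_inner_smul_right, norm_smul, norm_smul,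
      Real.norm_of_nonneg hΔ.le]
    rw [mul_pow, mul_pow, hhad s]
    have : (inner ℝ (had (sgn s) F0) G0 : ℝ) = T s := by
      rw [hT]
      simp only [PiLp.inner_apply, RCLike.inner_apply, conj_trivial]
      apply Finset.sum_congr rfl
      intro d _
      show G0 d * (sgn s d * F0 d) = G0 d * (sgn s d * F0 d)
      ring
    rw [this]; ring
  -- sum of T vanishes
  have hTsum : ∑ s : Fin D → Bool, T s = 0 := by
    rw [hT]
    simp only
    rw [Finset.sum_comm]
    apply Finset.sum_eq_zero
    intro d _
    have : ∑ s : Fin D → Bool, G0 d * (sgn s d * F0 d)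
        = (G0 d * F0 d) * ∑ s : Fin D → Bool, sgn s d := by
      rw [Finset.mul_sum]
      apply Finset.sum_congr rfl
      intro s _; ring
    rw [this, sum_sgn_aux, mul_zero]
  -- bound on ‖F0‖² + ‖G0‖²
  have hFG : ‖F0‖ ^ 2 + ‖G0‖ ^ 2 ≤ qmax ^ 2 := by
    have hpar : ‖Qm W + Qp W‖ ^ 2 + ‖Qm W - Qp W‖ ^ 2
        = 2 * ‖Qm W‖ ^ 2 + 2 * ‖Qp W‖ ^ 2 := by
      rw [norm_add_sq_real, norm_sub_sq_real]; ring
    have h1 : ‖F0‖ ^ 2 = (1/4) * ‖Qm W + Qp W‖ ^ 2 := by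
      rw [hF0, hF W, norm_smul, mul_pow, Real.norm_eq_abs,
        abs_of_pos (by norm_num : (0:ℝ) < 1/2)]
      ring
    have h2 : ‖G0‖ ^ 2 = (1/4) * ‖Qm W - Qp W‖ ^ 2 := by
      rw [hG0, hG W, norm_smul, mul_pow, Real.norm_eq_abs,
        abs_of_pos (by norm_num : (0:ℝ) < 1/2)]
      ring
    have hm := hQm W
    have hp := hQp W
    have hm0 := norm_nonneg (Qm W)
    have hp0 := norm_nonneg (Qp W)
    nlinarith
  set C1 : ℝ := φ W - Δ * ‖G0‖ ^ 2 + Lq * Δ ^ 2 * (‖F0‖ ^ 2 + ‖G0‖ ^ 2) with hC1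
  set C2 : ℝ := Δ - 2 * Lq * Δ ^ 2 with hC2
  -- per-sample bound
  have hstep : ∀ s : Fin D → Bool,
      φ (W + Δ • had (sgn s) F0 - Δ • G0) ≤ C1 + C2 * T s := by
    intro s
    have hd := descent_aux Lq hLq G φ hgrad hgradLip W (v s)
    have heq : W + Δ • had (sgn s) F0 - Δ • G0 = W + v s := by
      rw [hv]; abel
    rw [heq]
    rw [← hG0] at hd
    rw [hinner s, hnorm s] at hd
    rw [hC1, hC2]
    nlinarith [hd]
  -- summation
  have hsum : ∑ s : Fin D → Bool, φ (W + Δ • had (sgn s) F0 - Δ • G0)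
      ≤ (2 : ℝ) ^ D * C1 := by
    calc ∑ s : Fin D → Bool, φ (W + Δ • had (sgn s) F0 - Δ • G0)
        ≤ ∑ s : Fin D → Bool, (C1 + C2 * T s) :=
          Finset.sum_le_sum (fun s _ => hstep s)
      _ = (2 : ℝ) ^ D * C1 + C2 * ∑ s : Fin D → Bool, T s := by
          rw [Finset.sum_add_distrib, Finset.sum_const, ← Finset.mul_sum]
          simp [Finset.card_univ]
      _ = (2 : ℝ) ^ D * C1 := by rw [hTsum]; ring
  have hpow : (0 : ℝ) < (2 : ℝ) ^ D := by positivity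
  have hfin : ((2 : ℝ) ^ D)⁻¹ * ∑ s : Fin D → Bool, φ (W + Δ • had (sgn s) F0 - Δ • G0)
      ≤ C1 := by
    rw [inv_mul_le_iff₀ hpow]
    exact hsum.trans (le_of_eq (by ring))
  refine hfin.trans ?_
  rw [hC1]
  have : Lq * Δ ^ 2 * (‖F0‖ ^ 2 + ‖G0‖ ^ 2) ≤ Lq * Δ ^ 2 * qmax ^ 2 := by
    apply mul_le_mul_of_nonneg_left hFG (by positivity)
  linarith
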